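/- Let ψ : P → Q be the unique ℂ-algebra homomorphism with ψ(ℓ⁽ⁱ⁾) = D_Q^i((t⁽⁰⁾)²) and ψ(w⁽ⁱ⁾) = D_Q^i((t⁽⁰⁾)³) for all i ≥ 0, and let I ⊆ P be the ideal generated by {Dⁱ((w⁽⁰⁾)² − (ℓ⁽⁰⁾)³) : i ≥ 0}. Then ψ induces an isomorphism of ℂ-algebras from P/radical(I) onto the ℂ-subalgebra A of Q generated by {D_Q^i((t⁽⁰⁾)²) : i ≥ 0} ∪ {D_Q^i((t⁽⁰⁾)³) : i ≥ 0}. In particular, the reduced coordinate ring of the arc space of the cuspidal cubic is an integral domain, isomorphic to A. -/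

import Mathlib

set_option maxHeartbeats 1000000
set_option synthInstance.maxHeartbeats 400000

noncomputable section AuxTaylor

open Finset PowerSeries

theorem Derivation.iterate_leibniz' {R A : Type*} [CommRing R] [CommRing A] [Algebra R A]
    (d : Derivation R A A) (n : ℕ) (a b : A) :
    (⇑d)^[n] (a * b) =
      ∑ k ∈ range (n + 1), n.choose k • ((⇑d)^[n - k] a * (⇑d)^[k] b) := by
  induction n with
  | zero => simp
  | succ n IH =>
    calc
      (⇑d)^[n + 1] (a * b) =
          d (∑ k ∈ range n.succ, n.choose k • ((⇑d)^[n - k] a * (⇑d)^[k] b)) := by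
        rw [Function.iterate_succ_apply', IH]
      _ = (∑ k ∈ range n.succ, n.choose k • ((⇑d)^[n - k + 1] a * (⇑d)^[k] b)) +
          ∑ k ∈ range n.succ, n.choose k • ((⇑d)^[n - k] a * (⇑d)^[k + 1] b) := by
        rw [map_sum, ← sum_add_distrib]
        refine sum_congr rfl fun k hk => ?_
        rw [map_nsmul, Derivation.leibniz, smul_eq_mul, smul_eq_mul,
          ← Function.iterate_succ_apply' d, ← Function.iterate_succ_apply' d, smul_add,
          mul_comm ((⇑d)^[k] b), add_comm]
      _ = (∑ k ∈ range n.succ,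
                n.choose k.succ • ((⇑d)^[n - k] a * (⇑d)^[k + 1] b)) +
              1 • ((⇑d)^[n + 1] a * (⇑d)^[0] b) +
            ∑ k ∈ range n.succ, n.choose k • ((⇑d)^[n - k] a * (⇑d)^[k + 1] b) := ?_
      _ = ((∑ k ∈ range n.succ, n.choose k • ((⇑d)^[n - k] a * (⇑d)^[k + 1] b)) +
              ∑ k ∈ range n.succ,
                n.choose k.succ • ((⇑d)^[n - k] a * (⇑d)^[k + 1] b)) +
            1 • ((⇑d)^[n + 1] a * (⇑d)^[0] b) := by
        rw [add_comm, add_assoc]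
      _ = (∑ i ∈ range n.succ,
              (n + 1).choose (i + 1) • ((⇑d)^[n + 1 - (i + 1)] a * (⇑d)^[i + 1] b)) +
            1 • ((⇑d)^[n + 1] a * (⇑d)^[0] b) := by
        simp_rw [Nat.choose_succ_succ, Nat.succ_sub_succ, add_smul, sum_add_distrib]
      _ = ∑ k ∈ range n.succ.succ,
            n.succ.choose k • ((⇑d)^[n.succ - k] a * (⇑d)^[k] b) := by
        rw [sum_range_succ' _ n.succ, Nat.choose_zero_right, tsub_zero]
    congr
    refine (sum_range_succ' _ _).trans (congr_arg₂ (· + ·) ?_ ?_)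
    · rw [sum_range_succ, Nat.choose_succ_self, zero_smul, add_zero]
      refine sum_congr rfl fun k hk => ?_
      rw [mem_range] at hk
      congr
      omega
    · rw [Nat.choose_zero_right, tsub_zero]

/-- The Taylor-expansion ring homomorphism attached to a derivation and a point. -/
def taylorHom {A K : Type*} [CommRing A] [Algebra ℂ A] [Field K] [CharZero K]
    (d : Derivation ℂ A A) (φ : A →+* K) : A →+* PowerSeries K where
  toFun a := PowerSeries.mk fun n => φ ((⇑d)^[n] a) / n.factorial
  map_one' := by
    ext n
    rw [coeff_mk]
    cases n with
    | zero => simp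
    | succ m =>
      rw [Function.iterate_succ_apply, d.map_one_eq_zero]
      simp [Function.iterate_fixed (by simp : (⇑d) 0 = 0) m, coeff_one]
  map_mul' a b := by
    ext n
    rw [coeff_mk, coeff_mul, mul_comm a b, d.iterate_leibniz', map_sum,
      Finset.Nat.sum_antidiagonal_eq_sum_range_succ_mk, Finset.sum_div]
    refine sum_congr rfl fun k hk => ?_
    rw [mem_range, Nat.lt_succ_iff] at hk
    rw [coeff_mk, coeff_mk, map_nsmul, map_mul, nsmul_eq_mul]
    have hfac : ((k.factorial : K)) * (n - k).factorial * (n.choose k) = n.factorial := by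
      exact_mod_cast by rw [← Nat.choose_mul_factorial_mul_factorial hk]; ring
    have h1 : ((n - k).factorial : K) ≠ 0 := Nat.cast_ne_zero.2 (Nat.factorial_ne_zero _)
    have h2 : (k.factorial : K) ≠ 0 := Nat.cast_ne_zero.2 (Nat.factorial_ne_zero _)
    have h3 : (n.factorial : K) ≠ 0 := Nat.cast_ne_zero.2 (Nat.factorial_ne_zero _)
    field_simp
    rw [← hfac]
    ring
  map_zero' := by ext n; simp [Function.iterate_fixed (by simp : (⇑d) 0 = 0) n]
  map_add' a b := by
    ext n
    simp only [coeff_mk, map_add, iterate_map_add, add_div]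

theorem coeff_taylorHom {A K : Type*} [CommRing A] [Algebra ℂ A] [Field K] [CharZero K]
    (d : Derivation ℂ A A) (φ : A →+* K) (a : A) (n : ℕ) :
    PowerSeries.coeff n (taylorHom d φ a) = φ ((⇑d)^[n] a) / n.factorial := by
  have : (taylorHom d φ) a = PowerSeries.mk fun m => φ ((⇑d)^[m] a) / m.factorial := rfl
  rw [this, coeff_mk]

theorem cusp_param {K : Type*} [Field K] (x y : PowerSeries K) (h : y ^ 2 = x ^ 3) :
    ∃ s : PowerSeries K, s ^ 2 = x ∧ s ^ 3 = y := by
  rcases eq_or_ne x 0 with rfl | hx0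
  · have hy : y = 0 := pow_eq_zero_iff (n := 2) (by norm_num) |>.mp (by simpa using h)
    exact ⟨0, by simp, by simp [hy]⟩
  have hy0 : y ≠ 0 := by
    rintro rfl
    exact hx0 (pow_eq_zero_iff (n := 3) (by norm_num) |>.mp (by simpa using h.symm))
  have hxfin : x.order < ⊤ := order_finite_iff_ne_zero.2 hx0
  have hyfin : y.order < ⊤ := order_finite_iff_ne_zero.2 hy0
  set m := x.order.lift hxfin with hmdef
  set n := y.order.lift hyfin with hndef
  have hm : (m : ℕ∞) = x.order := ENat.coe_lift _ _
  have hn : (n : ℕ∞) = y.order := ENat.coe_lift _ _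
  have h2 : y.order + y.order = x.order + x.order + x.order := by
    have := congrArg order h
    rw [pow_two, pow_succ, pow_two, order_mul, order_mul, order_mul] at this
    simpa using this
  rw [← hm, ← hn] at h2
  have hmn : n + n = m + m + m := by exact_mod_cast h2
  obtain ⟨a, ham, han⟩ : ∃ a, m = 2 * a ∧ n = 3 * a := ⟨m / 2, by omega, by omega⟩
  have hxe : X ^ (2 * a) * divXPowOrder x = x := by
    have := X_pow_order_mul_divXPowOrder (f := x)
    rwa [show x.order.toNat = 2 * a by rw [← hm, ENat.toNat_coe]; omega] at this
  have hye : X ^ (3 * a) * divXPowOrder y = y := by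
    have := X_pow_order_mul_divXPowOrder (f := y)
    rwa [show y.order.toNat = 3 * a by rw [← hn, ENat.toNat_coe]; omega] at this
  obtain ⟨u, hu⟩ := isUnit_divided_by_X_pow_order hx0
  rw [← hu] at hxe
  set hh : PowerSeries K := divXPowOrder y with hhdef
  set gi : PowerSeries K := ↑u⁻¹ with hgidef
  have hgu : (u : PowerSeries K) * gi = 1 := u.mul_inv
  set b : PowerSeries K := X ^ a with hbdef
  have hxe' : b ^ 2 * (u : PowerSeries K) = x := by
    rw [hbdef, ← pow_mul, mul_comm a 2]; exact hxe
  have hye' : b ^ 3 * hh = y := by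
    rw [hbdef, ← pow_mul, mul_comm a 3]; exact hye
  have hb6 : b ^ 6 ≠ 0 := pow_ne_zero _ (pow_ne_zero _ X_ne_zero)
  have key : hh ^ 2 = (u : PowerSeries K) ^ 3 := by
    apply mul_left_cancel₀ hb6
    have e1 : b ^ 6 * hh ^ 2 = y ^ 2 := by rw [← hye']; ring
    have e2 : b ^ 6 * (u : PowerSeries K) ^ 3 = x ^ 3 := by rw [← hxe']; ring
    rw [e1, e2, h]
  refine ⟨b * hh * gi, ?_, ?_⟩
  · linear_combination (b^2*gi^2) * key +
      (b^2*(u : PowerSeries K)*((u : PowerSeries K)*gi+1)) * hgu + hxe'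
  · linear_combination (b^3*gi^3*hh) * key +
      (b^3*hh*(((u : PowerSeries K)*gi)^2+(u : PowerSeries K)*gi+1)) * hgu + hye'

end AuxTaylor



open MvPolynomial

noncomputable section

/-- The polynomial ring `P = ℂ[ℓ⁽⁰⁾, ℓ⁽¹⁾, …, w⁽⁰⁾, w⁽¹⁾, …]`:
variables are indexed by `Fin 2 × ℕ`, where `(0, i)` is `ℓ⁽ⁱ⁾` and `(1, i)` is `w⁽ⁱ⁾`. -/
abbrev P : Type := MvPolynomial (Fin 2 × ℕ) ℂ

/-- The unique ℂ-linear derivation `D : P → P` with `D(ℓ⁽ⁱ⁾) = ℓ⁽ⁱ⁺¹⁾`, `D(w⁽ⁱ⁾) = w⁽ⁱ⁺¹⁾`. -/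
def D : Derivation ℂ P P :=
  MvPolynomial.mkDerivation ℂ (fun p : Fin 2 × ℕ => (X (p.1, p.2 + 1) : P))

/-- `ℓ⁽ⁱ⁾` -/
def lv (i : ℕ) : P := X (0, i)

/-- `w⁽ⁱ⁾` -/
def wv (i : ℕ) : P := X (1, i)

/-- The polynomial ring `Q = ℂ[t⁽⁰⁾, t⁽¹⁾, …]`. -/
abbrev Q : Type := MvPolynomial ℕ ℂ

/-- The unique ℂ-linear derivation `D_Q : Q → Q` with `D_Q(t⁽ⁱ⁾) = t⁽ⁱ⁺¹⁾`. -/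
def DQ : Derivation ℂ Q Q :=
  MvPolynomial.mkDerivation ℂ (fun i : ℕ => (X (i + 1) : Q))

/-- `t⁽⁰⁾` -/
def t : Q := X 0

/-- `f⁽ⁱ⁾ = Dⁱ((w⁽⁰⁾)² − (ℓ⁽⁰⁾)³)`. -/
def fd (i : ℕ) : P := (⇑D)^[i] (wv 0 ^ 2 - lv 0 ^ 3)

/-- The ideal `I` generated by all `f⁽ⁱ⁾`, `i ≥ 0`. -/
def I : Ideal P := Ideal.span (Set.range fd)

/-- The ℂ-algebra homomorphism `ψ : P → Q` with `ψ(ℓ⁽ⁱ⁾) = D_Q^i((t⁽⁰⁾)²)` and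
`ψ(w⁽ⁱ⁾) = D_Q^i((t⁽⁰⁾)³)`. -/
def ψ : P →ₐ[ℂ] Q :=
  aeval (fun p : Fin 2 × ℕ => (⇑DQ)^[p.2] (if p.1 = 0 then t ^ 2 else t ^ 3))

/-- The ℂ-subalgebra `A ⊆ Q` generated by all `D_Q^i((t⁽⁰⁾)²)` and `D_Q^i((t⁽⁰⁾)³)`. -/
def A : Subalgebra ℂ Q :=
  Algebra.adjoin ℂ
    ((Set.range fun i : ℕ => (⇑DQ)^[i] (t ^ 2)) ∪ (Set.range fun i : ℕ => (⇑DQ)^[i] (t ^ 3)))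


/-! ### Basic computations with `D`, `DQ`, `ψ` -/

theorem D_lv (i : ℕ) : D (lv i) = lv (i + 1) := mkDerivation_X ℂ _ (0, i)

theorem D_wv (i : ℕ) : D (wv i) = wv (i + 1) := mkDerivation_X ℂ _ (1, i)

theorem DQ_X (i : ℕ) : DQ (X i : Q) = X (i + 1) := mkDerivation_X ℂ _ i

theorem D_iter_lv (n : ℕ) : (⇑D)^[n] (lv 0) = lv n := by
  suffices h : ∀ n i, (⇑D)^[n] (lv i) = lv (i + n) by simpa using h n 0
  intro n
  induction n with
  | zero => simp
  | succ n ih =>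
    intro i
    rw [Function.iterate_succ_apply, D_lv, ih]
    congr 1
    omega

theorem D_iter_wv (n : ℕ) : (⇑D)^[n] (wv 0) = wv n := by
  suffices h : ∀ n i, (⇑D)^[n] (wv i) = wv (i + n) by simpa using h n 0
  intro n
  induction n with
  | zero => simp
  | succ n ih =>
    intro i
    rw [Function.iterate_succ_apply, D_wv, ih]
    congr 1
    omega

theorem DQ_iter_t (n : ℕ) : (⇑DQ)^[n] t = X n := by
  suffices h : ∀ n i, (⇑DQ)^[n] (X i : Q) = X (i + n) by simpa [t] using h n 0
  intro n
  induction n with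
  | zero => simp
  | succ n ih =>
    intro i
    rw [Function.iterate_succ_apply, DQ_X, ih]
    congr 1
    omega

theorem psi_X (p : Fin 2 × ℕ) :
    ψ (X p) = (⇑DQ)^[p.2] (if p.1 = 0 then t ^ 2 else t ^ 3) := aeval_X _ p

theorem psi_D (p : P) : ψ (D p) = DQ (ψ p) := by
  induction p using MvPolynomial.induction_on with
  | C a =>
    rw [derivation_C, map_zero, ψ, aeval_C, algebraMap_eq, derivation_C]
  | add p q hp hq => simp only [map_add, hp, hq]
  | mul_X p n ih =>
    have hx : ψ (D (X n)) = DQ (ψ (X n)) := by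
      rw [show D (X n) = X (n.1, n.2 + 1) from mkDerivation_X ℂ _ n, psi_X, psi_X]
      exact Function.iterate_succ_apply' _ _ _
    rw [D.leibniz, smul_eq_mul, smul_eq_mul, map_add, map_mul, map_mul, hx, ih,
      map_mul, DQ.leibniz, smul_eq_mul, smul_eq_mul]

theorem psi_D_iter (n : ℕ) (p : P) : ψ ((⇑D)^[n] p) = (⇑DQ)^[n] (ψ p) := by
  induction n generalizing p with
  | zero => rfl
  | succ n ih => rw [Function.iterate_succ_apply, Function.iterate_succ_apply, ih, psi_D]

theorem psi_fd (i : ℕ) : ψ (fd i) = 0 := by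
  rw [fd, psi_D_iter]
  have h0 : ψ (wv 0 ^ 2 - lv 0 ^ 3) = 0 := by
    have h1 : ψ (lv 0) = t ^ 2 := by rw [lv, psi_X]; simp
    have h2 : ψ (wv 0) = t ^ 3 := by rw [wv, psi_X]; norm_num
    rw [map_sub, map_pow, map_pow, h1, h2, ← pow_mul, ← pow_mul]
    norm_num
  rw [h0, Function.iterate_fixed (by simp) i]

/-! ### The hard inclusion -/

theorem ker_le_radical {p : P} (hp : ψ p = 0) : p ∈ I.radical := by
  rw [Ideal.radical_eq_sInf, Ideal.mem_sInf]
  rintro 𝔭 ⟨hI𝔭, hprime⟩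
  haveI := hprime
  set K := FractionRing (P ⧸ 𝔭) with hK
  set φ : P →+* K := (algebraMap (P ⧸ 𝔭) K).comp (Ideal.Quotient.mk 𝔭) with hφ
  set jC : ℂ →+* K := φ.comp (C : ℂ →+* P) with hjC
  haveI : CharZero K := charZero_of_injective_ringHom jC.injective
  have hφI : ∀ q ∈ 𝔭, φ q = 0 := fun q hq => by
    rw [hφ, RingHom.comp_apply, Ideal.Quotient.eq_zero_iff_mem.2 hq, map_zero]
  have hφinj : ∀ q : P, φ q = 0 → q ∈ 𝔭 := fun q hq => by
    rw [hφ, RingHom.comp_apply] at hq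
    rw [← Ideal.Quotient.eq_zero_iff_mem]
    exact IsFractionRing.injective (P ⧸ 𝔭) K (by rwa [map_zero])
  set T := taylorHom D φ with hT
  have hT0 : T (wv 0 ^ 2 - lv 0 ^ 3) = 0 := by
    apply PowerSeries.ext
    intro n
    rw [hT, coeff_taylorHom, show (⇑D)^[n] (wv 0 ^ 2 - lv 0 ^ 3) = fd n from rfl,
      hφI _ (hI𝔭 (Ideal.subset_span ⟨n, rfl⟩)), zero_div, map_zero]
  have hyx : (T (wv 0)) ^ 2 = (T (lv 0)) ^ 3 := by
    have h2 := hT0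
    rw [map_sub, map_pow, map_pow, sub_eq_zero] at h2
    exact h2
  obtain ⟨s, hs2, hs3⟩ := cusp_param _ _ hyx
  set χ : Q →+* K :=
    eval₂Hom jC (fun i => (i.factorial : K) * PowerSeries.coeff i s) with hχ
  set Tχ := taylorHom DQ χ with hTχ
  have hTt : Tχ t = s := by
    apply PowerSeries.ext
    intro n
    rw [hTχ, coeff_taylorHom, DQ_iter_t, hχ, eval₂Hom_X',
      mul_div_cancel_left₀ _ (Nat.cast_ne_zero.2 (Nat.factorial_ne_zero n))]
  have hvar : ∀ v : Fin 2 × ℕ, χ (ψ (X v)) = φ (X v) := by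
    rintro ⟨e, i⟩
    have hfac : ((i.factorial : K)) ≠ 0 := Nat.cast_ne_zero.2 (Nat.factorial_ne_zero _)
    fin_cases e
    · have h1 : Tχ (t ^ 2) = T (lv 0) := by rw [map_pow, hTt, hs2]
      have h2 := congrArg (PowerSeries.coeff i) h1
      rw [hTχ, hT, coeff_taylorHom, coeff_taylorHom, D_iter_lv,
        div_eq_div_iff hfac hfac] at h2
      have heq := mul_right_cancel₀ hfac h2
      rw [psi_X]
      simpa [lv] using heq
    · have h1 : Tχ (t ^ 3) = T (wv 0) := by rw [map_pow, hTt, hs3]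
      have h2 := congrArg (PowerSeries.coeff i) h1
      rw [hTχ, hT, coeff_taylorHom, coeff_taylorHom, D_iter_wv,
        div_eq_div_iff hfac hfac] at h2
      have heq := mul_right_cancel₀ hfac h2
      rw [psi_X]
      simpa [wv] using heq
  have hcomp : χ.comp ψ.toRingHom = φ := by
    apply MvPolynomial.ringHom_ext
    · intro a
      rw [RingHom.comp_apply]
      have hc : ψ.toRingHom (C a) = C a := by
        show ψ (C a) = C a
        rw [ψ, aeval_C, algebraMap_eq]
      rw [hc, hχ, eval₂Hom_C, hjC, RingHom.comp_apply]
    · intro v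
      rw [RingHom.comp_apply]
      exact hvar v
  have hzero : φ p = 0 := by
    rw [← hcomp, RingHom.comp_apply, show ψ.toRingHom p = ψ p from rfl, hp, map_zero]
  exact hφinj p hzero

/-- `ψ` induces a ℂ-algebra isomorphism `P/radical(I) ≃ A`; in particular the reduced
coordinate ring of the arc space of the cuspidal cubic is an integral domain. -/
theorem quotient_radical_iso_A :
    (∃ e : (P ⧸ I.radical) ≃ₐ[ℂ] A,
        ∀ p : P, (e (Ideal.Quotient.mk I.radical p) : Q) = ψ p) ∧
      IsDomain (P ⧸ I.radical) := by
  haveI hkp : (RingHom.ker ψ).IsPrime := RingHom.ker_isPrime ψ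
  have hIker : I ≤ RingHom.ker ψ := by
    rw [I, Ideal.span_le]
    rintro _ ⟨i, rfl⟩
    exact psi_fd i
  have hrad : I.radical = RingHom.ker ψ := by
    apply le_antisymm
    · rw [Ideal.radical_eq_sInf]
      exact sInf_le ⟨hIker, hkp⟩
    · intro p hp
      exact ker_le_radical (RingHom.mem_ker.mp hp)
  have hsetan : (Set.range fun p : Fin 2 × ℕ => (⇑DQ)^[p.2] (if p.1 = 0 then t ^ 2 else t ^ 3))
      = (Set.range fun i : ℕ => (⇑DQ)^[i] (t ^ 2))
        ∪ (Set.range fun i : ℕ => (⇑DQ)^[i] (t ^ 3)) := by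
    ext q
    constructor
    · rintro ⟨⟨e, i⟩, rfl⟩
      fin_cases e
      · exact Or.inl ⟨i, by simp⟩
      · exact Or.inr ⟨i, by norm_num⟩
    · rintro (⟨i, rfl⟩ | ⟨i, rfl⟩)
      · exact ⟨(0, i), by simp⟩
      · exact ⟨(1, i), by norm_num⟩
  have hrange : ψ.range = A := by
    rw [A, hsetan.symm, Algebra.adjoin_range_eq_range_aeval]
    rfl
  have hmem : ∀ x, ψ x ∈ A := fun x => hrange ▸ ⟨x, rfl⟩
  set ψ' : P →ₐ[ℂ] A := ψ.codRestrict A hmem with hψ'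
  have hsurj : Function.Surjective ψ' := by
    rintro ⟨q, hq⟩
    rw [← hrange] at hq
    obtain ⟨p, hpq⟩ := hq
    exact ⟨p, Subtype.ext hpq⟩
  have hker' : RingHom.ker ψ' = RingHom.ker ψ := by
    ext x
    rw [RingHom.mem_ker, RingHom.mem_ker, hψ']
    constructor
    · intro h
      have h2 := congrArg (Subtype.val) h
      simpa using h2
    · intro h
      exact Subtype.ext (by simpa using h)
  have hEq : I.radical = RingHom.ker ψ' := hrad.trans hker'.symm
  constructor
  · refine ⟨(Ideal.quotientEquivAlgOfEq ℂ hEq).trans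
      (Ideal.quotientKerAlgEquivOfSurjective hsurj), fun p => ?_⟩
    rw [AlgEquiv.trans_apply, Ideal.quotientEquivAlgOfEq_mk]
    have happ : (Ideal.quotientKerAlgEquivOfSurjective hsurj)
        (Ideal.Quotient.mk (RingHom.ker ψ') p) = ψ' p := by
      have hr : (Ideal.quotientKerAlgEquivOfSurjective hsurj)
          (Ideal.Quotient.mk (RingHom.ker ψ') p)
          = Ideal.kerLiftAlg ψ' (Ideal.Quotient.mk (RingHom.ker ψ') p) := rfl
      rw [hr, Ideal.kerLiftAlg_mk]
    rw [happ]
    rfl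
  · haveI : (I.radical).IsPrime := by rw [hrad]; exact hkp
    exact Ideal.Quotient.isDomain _
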